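/- The function p ↦ log D(p), where D(p) = 2^{p/2} Γ(1-p) / Γ(1-p/2)³, is convex on the interval (0,1). -/

import Mathlib

open Real

noncomputable def D (p : ℝ) : ℝ :=
  2 ^ (p / 2) * Real.Gamma (1 - p) / Real.Gamma (1 - p / 2) ^ 3

/-- Each summand in the Euler-limit approximation of `log D` is convex on `(0,1)`. -/
lemma convexOn_term (c : ℝ) (hc : 1 ≤ c) :
    ConvexOn ℝ (Set.Ioo (0:ℝ) 1)
      (fun p => 3 * Real.log (2 * c - p) - Real.log (c - p)) := by
  have h1 : ∀ x ∈ Set.Ioo (0:ℝ) 1, 0 < c - x := fun x hx => by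
    have := hx.2; linarith
  have h2 : ∀ x ∈ Set.Ioo (0:ℝ) 1, 0 < 2 * c - x := fun x hx => by
    have := hx.2; linarith
  have hint : interior (Set.Ioo (0:ℝ) 1) = Set.Ioo (0:ℝ) 1 := isOpen_Ioo.interior_eq
  apply convexOn_of_hasDerivWithinAt2_nonneg (f' := fun p => (c - p)⁻¹ - 3 * (2 * c - p)⁻¹)
    (f'' := fun p => ((c - p) ^ 2)⁻¹ - 3 * ((2 * c - p) ^ 2)⁻¹) (convex_Ioo 0 1)
  · exact (continuousOn_const.mul ((continuousOn_const.sub continuousOn_id).log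
      (fun x hx => (h2 x hx).ne'))).sub
      ((continuousOn_const.sub continuousOn_id).log (fun x hx => (h1 x hx).ne'))
  · intro x hx
    rw [hint] at hx
    have d2 : HasDerivAt (fun p : ℝ => 2 * c - p) (-1) x := by
      exact (hasDerivAt_id' x).const_sub (2 * c)
    have d1 : HasDerivAt (fun p : ℝ => c - p) (-1) x := by
      exact (hasDerivAt_id' x).const_sub c
    have l2 : HasDerivAt (fun p : ℝ => Real.log (2 * c - p)) ((2 * c - x)⁻¹ * (-1)) x :=
      (Real.hasDerivAt_log (h2 x hx).ne').comp x d2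
    have l1 : HasDerivAt (fun p : ℝ => Real.log (c - p)) ((c - x)⁻¹ * (-1)) x :=
      (Real.hasDerivAt_log (h1 x hx).ne').comp x d1
    have := (l2.const_mul 3).sub l1
    have heq : 3 * ((2 * c - x)⁻¹ * (-1)) - (c - x)⁻¹ * (-1)
        = (c - x)⁻¹ - 3 * (2 * c - x)⁻¹ := by ring
    rw [heq] at this
    exact this.hasDerivWithinAt
  · intro x hx
    rw [hint] at hx
    have d2 : HasDerivAt (fun p : ℝ => 2 * c - p) (-1) x := by
      exact (hasDerivAt_id' x).const_sub (2 * c)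
    have d1 : HasDerivAt (fun p : ℝ => c - p) (-1) x := by
      exact (hasDerivAt_id' x).const_sub c
    have i1 : HasDerivAt (fun p : ℝ => (c - p)⁻¹) (((c - x) ^ 2)⁻¹) x := by
      have := (hasDerivAt_inv (h1 x hx).ne').comp x d1
      simp at this; exact this
    have i2 : HasDerivAt (fun p : ℝ => (2 * c - p)⁻¹) (((2 * c - x) ^ 2)⁻¹) x := by
      have := (hasDerivAt_inv (h2 x hx).ne').comp x d2
      simp at this; exact this
    exact (i1.sub (i2.const_mul 3)).hasDerivWithinAt
  · intro x hx
    rw [hint] at hx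
    have hA : 0 < (c - x) ^ 2 := pow_pos (h1 x hx) 2
    have hB : 0 < (2 * c - x) ^ 2 := pow_pos (h2 x hx) 2
    have key : 3 * (c - x) ^ 2 ≤ (2 * c - x) ^ 2 := by nlinarith [hx.1, hx.2]
    have : 3 * ((2 * c - x) ^ 2)⁻¹ ≤ ((c - x) ^ 2)⁻¹ := by
      have h := (div_le_div_iff₀ hB hA).mpr (by nlinarith : 3 * (c - x) ^ 2 ≤ 1 * (2 * c - x) ^ 2)
      rw [div_eq_mul_inv, one_div] at h
      exact h
    linarith

lemma convexOn_affine {s : Set ℝ} (hs : Convex ℝ s) (a : ℝ) :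
    ConvexOn ℝ s (fun x => x / 2 * a) :=
  ⟨hs, fun x _ y _ u v _ _ _ => by
    simp only [smul_eq_mul]
    exact le_of_eq (by ring)⟩

lemma convexOn_finsum {s : Set ℝ} (hs : Convex ℝ s) (f : ℕ → ℝ → ℝ) (t : Finset ℕ)
    (h : ∀ k ∈ t, ConvexOn ℝ s (f k)) :
    ConvexOn ℝ s (fun x => ∑ k ∈ t, f k x) := by
  classical
  induction t using Finset.induction with
  | empty => simpa using convexOn_const 0 hs
  | insert _ _ hnot ih =>
    rename_i i t'
    simp only [Finset.sum_insert hnot]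
    exact (h i (Finset.mem_insert_self i t')).add
      (ih (fun k hk => h k (Finset.mem_insert_of_mem hk)))

lemma log_GammaSeq_eq (s : ℝ) (hs : 0 < s) (n : ℕ) (hn : 1 ≤ n) :
    Real.log (Real.GammaSeq s n)
      = s * Real.log n + Real.log (n.factorial : ℝ) - ∑ j ∈ Finset.range (n + 1), Real.log (s + j) := by
  have hn' : (0:ℝ) < n := by exact_mod_cast hn
  have hfac : ((n.factorial : ℕ) : ℝ) ≠ 0 := Nat.cast_ne_zero.mpr n.factorial_ne_zero
  have hterm : ∀ j ∈ Finset.range (n + 1), s + (j : ℝ) ≠ 0 := fun j _ => by positivity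
  rw [Real.GammaSeq, Real.log_div (by positivity) (Finset.prod_ne_zero_iff.mpr hterm),
    Real.log_mul (by positivity) hfac, Real.log_rpow hn', Real.log_prod hterm]

theorem stmt3 : ConvexOn ℝ (Set.Ioo (0:ℝ) 1) (fun p => Real.log (D p)) := by
  -- The approximating convex functions
  set F : ℕ → ℝ → ℝ := fun n x =>
    x / 2 * (Real.log 2 + Real.log n) +
      ∑ k ∈ Finset.range (n + 1),
        (3 * Real.log (2 * ((k : ℝ) + 1) - x) - Real.log (((k : ℝ) + 1) - x)) with hF
  have hFconv : ∀ n, ConvexOn ℝ (Set.Ioo (0:ℝ) 1) (F n) := by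
    intro n
    exact (convexOn_affine (convex_Ioo 0 1) _).add
      (convexOn_finsum (convex_Ioo 0 1) _ _ (fun k _ => by
        have := convexOn_term ((k : ℝ) + 1) (le_add_of_nonneg_left (Nat.cast_nonneg k))
        simpa using this))
  -- The raw sequence
  set G : ℕ → ℝ → ℝ := fun n x =>
    x / 2 * Real.log 2 + Real.log (Real.GammaSeq (1 - x) n)
      - 3 * Real.log (Real.GammaSeq (1 - x / 2) n) with hG
  set C : ℕ → ℝ := fun n =>
    -2 * Real.log n - 2 * Real.log (n.factorial : ℝ) - 3 * ((n : ℝ) + 1) * Real.log 2 with hC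
  -- the identity G n x = F n x + C n
  have hGF : ∀ n, 1 ≤ n → ∀ x ∈ Set.Ioo (0:ℝ) 1, G n x = F n x + C n := by
    intro n hn x hx
    have hx0 := hx.1; have hx1 := hx.2
    have e1 := log_GammaSeq_eq (1 - x) (by linarith) n hn
    have e2 := log_GammaSeq_eq (1 - x / 2) (by linarith) n hn
    have s1 : ∑ j ∈ Finset.range (n + 1), Real.log ((1 - x) + j)
        = ∑ j ∈ Finset.range (n + 1), Real.log (((j : ℝ) + 1) - x) :=
      Finset.sum_congr rfl fun j _ => by rw [show (1 - x) + (j:ℝ) = ((j:ℝ) + 1) - x by ring]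
    have s2 : ∑ j ∈ Finset.range (n + 1), Real.log ((1 - x / 2) + j)
        = (∑ j ∈ Finset.range (n + 1), Real.log (2 * ((j : ℝ) + 1) - x))
          - ((n : ℝ) + 1) * Real.log 2 := by
      have : ∀ j ∈ Finset.range (n + 1),
          Real.log ((1 - x / 2) + j) = Real.log (2 * ((j : ℝ) + 1) - x) - Real.log 2 := by
        intro j _
        have hj : (0:ℝ) ≤ (j : ℝ) := Nat.cast_nonneg j
        rw [show (1 - x / 2) + (j:ℝ) = (2 * ((j:ℝ) + 1) - x) / 2 by ring,
          Real.log_div (by nlinarith) two_ne_zero]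
      rw [Finset.sum_congr rfl this, Finset.sum_sub_distrib, Finset.sum_const,
        Finset.card_range, nsmul_eq_mul]
      push_cast
      ring
    have s3 : ∑ k ∈ Finset.range (n + 1),
        (3 * Real.log (2 * ((k : ℝ) + 1) - x) - Real.log (((k : ℝ) + 1) - x))
        = 3 * (∑ j ∈ Finset.range (n + 1), Real.log (2 * ((j : ℝ) + 1) - x))
          - ∑ j ∈ Finset.range (n + 1), Real.log (((j : ℝ) + 1) - x) := by
      rw [Finset.sum_sub_distrib, Finset.mul_sum]
    simp only [hG, hF, hC]
    rw [e1, e2, s1, s2, s3]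
    ring
  -- convergence
  have hkey : ∀ x ∈ Set.Ioo (0:ℝ) 1,
      Filter.Tendsto (fun n => G n x) Filter.atTop (nhds (Real.log (D x))) := by
    intro x hx
    have hx0 := hx.1; have hx1 := hx.2
    have hg1 : 0 < Real.Gamma (1 - x) := Real.Gamma_pos_of_pos (by linarith)
    have hg2 : 0 < Real.Gamma (1 - x / 2) := Real.Gamma_pos_of_pos (by linarith)
    have t1 : Filter.Tendsto (fun n => Real.log (Real.GammaSeq (1 - x) n)) Filter.atTop
        (nhds (Real.log (Real.Gamma (1 - x)))) :=
      ((Real.continuousAt_log hg1.ne').tendsto).comp (Real.GammaSeq_tendsto_Gamma _)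
    have t2 : Filter.Tendsto (fun n => Real.log (Real.GammaSeq (1 - x / 2) n)) Filter.atTop
        (nhds (Real.log (Real.Gamma (1 - x / 2)))) :=
      ((Real.continuousAt_log hg2.ne').tendsto).comp (Real.GammaSeq_tendsto_Gamma _)
    have hD : Real.log (D x)
        = x / 2 * Real.log 2 + Real.log (Real.Gamma (1 - x))
          - 3 * Real.log (Real.Gamma (1 - x / 2)) := by
      rw [D, Real.log_div (by positivity) (by positivity),
        Real.log_mul (by positivity) hg1.ne', Real.log_rpow two_pos, Real.log_pow]
      push_cast
      ring
    rw [hD]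
    exact (tendsto_const_nhds.add t1).sub (t2.const_mul 3)
  refine ⟨convex_Ioo 0 1, ?_⟩
  intro p hp q hq a b ha hb hab
  have hm : a • p + b • q ∈ Set.Ioo (0:ℝ) 1 := (convex_Ioo (0:ℝ) 1) hp hq ha hb hab
  simp only [smul_eq_mul]
  refine le_of_tendsto_of_tendsto (hkey _ hm) (((hkey p hp).const_mul a).add
    ((hkey q hq).const_mul b)) ?_
  filter_upwards [Filter.eventually_ge_atTop 1] with n hn
  have hconv := (hFconv n).2 hp hq ha hb hab
  simp only [smul_eq_mul] at hconv hm ⊢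
  rw [hGF n hn _ hm, hGF n hn p hp, hGF n hn q hq]
  have : a * C n + b * C n = C n := by rw [← add_mul, hab, one_mul]
  nlinarith [hconv]
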